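/- For every x ∈ ℚ_p, x = Σ_{n=0}^∞ ⌊ε(σ^n(x))⌋_p · ∏_{m=0}^n (σ^m(x)/ε(σ^m(x))), i.e., the shift map σ recovers the p-adic digit expansion of x. -/
import Mathlib


open scoped Classical in
noncomputable def eps {p : ℕ} [Fact p.Prime] (x : ℚ_[p]) : ℚ_[p] :=
  if x = 0 then 1 else (p : ℚ_[p]) ^ (-x.valuation) * x

noncomputable def fdigit {p : ℕ} [Fact p.Prime] (x : ℚ_[p]) : ℕ :=
  if h : ‖x‖ ≤ 1 then ((PadicInt.toZMod (⟨x, h⟩ : ℤ_[p])).val) else 0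

noncomputable def tau {p : ℕ} [Fact p.Prime] (x : ℚ_[p]) : ℚ_[p] :=
  1 / eps x - (fdigit (1 / eps x) : ℚ_[p])

noncomputable def sigma {p : ℕ} [Fact p.Prime] (x : ℚ_[p]) : ℚ_[p] :=
  eps x - (fdigit (eps x) : ℚ_[p])

/-- `f(x) = Σ_{n=0}^∞ ⌊1/ε(τⁿ x)⌋_p ∏_{m=0}^n τᵐ x / ε(τᵐ x)` -/
noncomputable def schneiderF {p : ℕ} [Fact p.Prime] (x : ℚ_[p]) : ℚ_[p] :=
  ∑' n : ℕ, (fdigit (1 / eps (tau^[n] x)) : ℚ_[p]) *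
    ∏ m ∈ Finset.range (n + 1), (tau^[m] x) / eps (tau^[m] x)

/-- Finite continued fraction `b 0 / (a 0 + b 1 / (a 1 + ⋯ + b n / (a n + x)))`. -/
noncomputable def cf {p : ℕ} [Fact p.Prime] : (ℕ → ℚ_[p]) → (ℕ → ℚ_[p]) → ℕ → ℚ_[p] → ℚ_[p]
  | a, b, 0, x => b 0 / (a 0 + x)
  | a, b, n + 1, x => b 0 / (a 0 + cf (fun i => a (i + 1)) (fun i => b (i + 1)) n x)

variable {p : ℕ} [Fact p.Prime]

lemma eps_ne_zero (y : ℚ_[p]) : eps y ≠ 0 := by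
  unfold eps
  split
  · exact one_ne_zero
  · exact mul_ne_zero (zpow_ne_zero _ (Nat.cast_ne_zero.mpr (Fact.out : p.Prime).ne_zero)) ‹_›

lemma norm_eps_eq_one {y : ℚ_[p]} (hy : y ≠ 0) : ‖eps y‖ = 1 := by
  have hp : (1:ℝ) < p := by exact_mod_cast (Fact.out : p.Prime).one_lt
  have hp0 : (p:ℝ) ≠ 0 := by positivity
  rw [eps, if_neg hy, norm_mul, Padic.norm_p_zpow, Padic.norm_eq_zpow_neg_valuation hy,
    neg_neg, ← zpow_add₀ hp0, add_neg_cancel, zpow_zero]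

lemma norm_eps_le_one (y : ℚ_[p]) : ‖eps y‖ ≤ 1 := by
  by_cases hy : y = 0
  · simp [eps, hy]
  · exact (norm_eps_eq_one hy).le

lemma norm_sigma_le (y : ℚ_[p]) : ‖sigma y‖ ≤ (p:ℝ)⁻¹ := by
  have h := norm_eps_le_one y
  set Z : ℤ_[p] := ⟨eps y, h⟩ with hZ
  have hd : fdigit (eps y) = (PadicInt.toZMod Z).val := by rw [fdigit, dif_pos h]
  have hmem := PadicInt.toZMod_spec Z
  rw [← ZMod.natCast_val, PadicInt.maximalIdeal_eq_span_p, Ideal.mem_span_singleton,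
    ← PadicInt.norm_lt_one_iff_dvd] at hmem
  have hle : ‖Z - ((PadicInt.toZMod Z).val : ℤ_[p])‖ ≤ (p:ℝ) ^ (-1 : ℤ) := by
    rw [PadicInt.norm_le_pow_iff_norm_lt_pow_add_one]
    simpa using hmem
  have heq : sigma y = ((Z - ((PadicInt.toZMod Z).val : ℤ_[p]) : ℤ_[p]) : ℚ_[p]) := by
    push_cast
    rw [sigma, hd]
  rw [heq, ← PadicInt.norm_def]
  simpa using hle

lemma key_step (y : ℚ_[p]) : y = (y / eps y) * ((fdigit (eps y) : ℚ_[p]) + sigma y) := by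
  by_cases hy : y = 0
  · simp [hy]
  · rw [sigma, add_sub_cancel, div_mul_cancel₀ y (eps_ne_zero y)]

lemma norm_div_eps_le (y : ℚ_[p]) : ‖y / eps y‖ ≤ ‖y‖ := by
  by_cases hy : y = 0
  · simp [hy]
  · rw [norm_div, norm_eps_eq_one hy]; simp

lemma step_norm (y : ℚ_[p]) : ‖(y / eps y) * sigma y‖ ≤ ‖y‖ * (p:ℝ)⁻¹ := by
  rw [norm_mul]
  exact mul_le_mul (norm_div_eps_le y) (norm_sigma_le y) (norm_nonneg _) (norm_nonneg _)


theorem shift_digit_expansion (p : ℕ) [Fact p.Prime] (x : ℚ_[p]) :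
    x = ∑' n : ℕ, (fdigit (eps (sigma^[n] x)) : ℚ_[p]) *
      ∏ m ∈ Finset.range (n + 1), sigma^[m] x / eps (sigma^[m] x) := by
  have hp : (1:ℝ) < p := by exact_mod_cast (Fact.out : p.Prime).one_lt
  have hr0 : (0:ℝ) ≤ (p:ℝ)⁻¹ := by positivity
  have hr1 : (p:ℝ)⁻¹ < 1 := inv_lt_one_of_one_lt₀ hp
  set q : ℕ → ℚ_[p] := fun m => sigma^[m] x / eps (sigma^[m] x) with hq
  set f : ℕ → ℚ_[p] := fun n => (fdigit (eps (sigma^[n] x)) : ℚ_[p]) *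
      ∏ m ∈ Finset.range (n + 1), q m with hf
  set T : ℕ → ℚ_[p] := fun N => (∏ m ∈ Finset.range N, q m) * sigma^[N] x with hT
  have claim1 : ∀ N, x = (∑ n ∈ Finset.range N, f n) + T N := by
    intro N
    induction N with
    | zero => simp [hT]
    | succ N ih =>
      rw [Finset.sum_range_succ, ih]
      have hiter : sigma^[N+1] x = sigma (sigma^[N] x) := Function.iterate_succ_apply' _ _ _
      have hk := key_step (sigma^[N] x)
      have : T N = f N + T (N+1) := by
        rw [hT, hf]
        simp only
        rw [Finset.prod_range_succ, hiter]
        calc (∏ m ∈ Finset.range N, q m) * sigma^[N] x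
            = (∏ m ∈ Finset.range N, q m) *
              ((sigma^[N] x / eps (sigma^[N] x)) *
                ((fdigit (eps (sigma^[N] x)) : ℚ_[p]) + sigma (sigma^[N] x))) := by rw [← hk]
          _ = _ := by rw [hq]; ring
      rw [this]; ring
  have claim2 : ∀ N, ‖T N‖ ≤ ‖x‖ * ((p:ℝ)⁻¹) ^ N := by
    intro N
    induction N with
    | zero => simp [hT]
    | succ N ih =>
      have hiter : sigma^[N+1] x = sigma (sigma^[N] x) := Function.iterate_succ_apply' _ _ _
      have : T (N+1) = (∏ m ∈ Finset.range N, q m) *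
          ((sigma^[N] x / eps (sigma^[N] x)) * sigma (sigma^[N] x)) := by
        rw [hT]; simp only; rw [Finset.prod_range_succ, hiter, hq]; ring
      rw [this, norm_mul]
      calc ‖∏ m ∈ Finset.range N, q m‖ * ‖(sigma^[N] x / eps (sigma^[N] x)) * sigma (sigma^[N] x)‖
          ≤ ‖∏ m ∈ Finset.range N, q m‖ * (‖sigma^[N] x‖ * (p:ℝ)⁻¹) :=
            mul_le_mul_of_nonneg_left (step_norm _) (norm_nonneg _)
        _ = (‖∏ m ∈ Finset.range N, q m‖ * ‖sigma^[N] x‖) * (p:ℝ)⁻¹ := by ring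
        _ = ‖T N‖ * (p:ℝ)⁻¹ := by rw [hT]; simp [norm_mul]
        _ ≤ (‖x‖ * ((p:ℝ)⁻¹) ^ N) * (p:ℝ)⁻¹ := mul_le_mul_of_nonneg_right ih hr0
        _ = ‖x‖ * ((p:ℝ)⁻¹) ^ (N+1) := by ring
  have hT0 : Filter.Tendsto T Filter.atTop (nhds 0) := by
    exact squeeze_zero_norm claim2
      (by simpa using (tendsto_pow_atTop_nhds_zero_of_lt_one hr0 hr1).const_mul ‖x‖)
  have htend : Filter.Tendsto (fun N => ∑ n ∈ Finset.range N, f n) Filter.atTop (nhds x) := by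
    have : (fun N => ∑ n ∈ Finset.range N, f n) = fun N => x - T N := by
      funext N; rw [claim1 N]; ring
    rw [this]
    simpa using (tendsto_const_nhds (x := x)).sub hT0
  have hfT : ∀ n, f n = T n - T (n+1) := by
    intro n
    have h1 := claim1 n
    have h2 := claim1 (n+1)
    rw [Finset.sum_range_succ] at h2
    have : (∑ k ∈ Finset.range n, f k) + T n = ((∑ k ∈ Finset.range n, f k) + f n) + T (n+1) := by
      rw [← h1, ← h2]
    have h3 : T n = f n + T (n+1) := add_left_cancel (this.trans (add_assoc _ _ _))
    rw [h3]; ring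
  have hsum : Summable f := by
    apply Summable.of_norm_bounded (g := fun n => (2 * ‖x‖) * ((p:ℝ)⁻¹) ^ n)
      ((summable_geometric_of_lt_one hr0 hr1).mul_left _)
    intro n
    rw [hfT n]
    calc ‖T n - T (n+1)‖ ≤ ‖T n‖ + ‖T (n+1)‖ := norm_sub_le _ _
      _ ≤ ‖x‖ * ((p:ℝ)⁻¹) ^ n + ‖x‖ * ((p:ℝ)⁻¹) ^ (n+1) := add_le_add (claim2 n) (claim2 (n+1))
      _ ≤ ‖x‖ * ((p:ℝ)⁻¹) ^ n + ‖x‖ * ((p:ℝ)⁻¹) ^ n := by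
          exact add_le_add le_rfl (mul_le_mul_of_nonneg_left
            (pow_le_pow_of_le_one hr0 hr1.le (Nat.le_succ n)) (norm_nonneg x))
      _ = (2 * ‖x‖) * ((p:ℝ)⁻¹) ^ n := by ring
  exact tendsto_nhds_unique htend hsum.hasSum.tendsto_sum_nat
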